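/- For every integer b ≥ 0 and all n ≥ 1, p^{3+b}_1(n) = Σ_{s=1}^{n} C(n,s) (−1)^{s+1} (2(3+b)^s − (2+b)^s) · p^{3+b}_1(n−s). -/

import Mathlib

/-- `p r j n` : the number of restricted barred preferential arrangements of an `n`-set with
`r` restricted sections and `j` free sections, given by the convergent series
`p^r_j(n) = \sum_{s=0}^\infty C(j+s-1, s) (r+s)^n / 2^(j+s)`
(the coefficient of `m^n/n!` in `e^{rm}/(2-e^m)^j`). -/
noncomputable def p (r j n : ℕ) : ℝ :=
  ∑' s : ℕ, ((j + s - 1).choose s : ℝ) * ((r + s : ℕ) : ℝ) ^ n / 2 ^ (j + s)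

lemma aux_sum (m : ℕ) : Summable (fun t : ℕ => ((t : ℝ)) ^ m / 2 ^ t) := by
  have h := summable_pow_mul_geometric_of_norm_lt_one (R := ℝ) m
    (r := (2 : ℝ)⁻¹) (by norm_num)
  refine h.congr (fun t => ?_)
  rw [div_eq_mul_inv, inv_pow]

lemma aux_sum2 (R m : ℕ) :
    Summable (fun s : ℕ => ((R + s : ℕ) : ℝ) ^ m / 2 ^ (s + 1)) := by
  have h2 := (summable_nat_add_iff (f := fun t : ℕ => ((t : ℝ)) ^ m / 2 ^ t) R).2 (aux_sum m)
  have h3 := h2.mul_left ((2 : ℝ) ^ R / 2)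
  refine h3.congr (fun s => ?_)
  push_cast
  rw [pow_add, pow_add]
  field_simp
  ring

lemma p_one (r k : ℕ) : p r 1 k = ∑' s : ℕ, ((r + s : ℕ) : ℝ) ^ k / 2 ^ (s + 1) := by
  unfold p
  congr 1
  funext s
  simp [Nat.add_sub_cancel_left, Nat.choose_self, add_comm 1 s]

/-- `2(3+b)^s - (2+b)^s` is the multi-poly-Bernoulli number `B^{(-2,0,...,0)}_s`
with `b` trailing zeros. -/
theorem stmt15 (b n : ℕ) (hn : 1 ≤ n) :
    p (3 + b) 1 n = ∑ s ∈ Finset.Icc 1 n, (n.choose s : ℝ) * (-1) ^ (s + 1) *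
      (2 * ((3 : ℝ) + b) ^ s - ((2 : ℝ) + b) ^ s) * p (3 + b) 1 (n - s) := by
  set r : ℕ := 3 + b with hr
  have hrR : ((3 : ℝ) + b) = (r : ℝ) := by push_cast [hr]; ring
  have hr1 : ((2 : ℝ) + b) = (r : ℝ) - 1 := by push_cast [hr]; ring
  -- the key vanishing identity
  have key : ∑ s ∈ Finset.range (n + 1),
      (n.choose s : ℝ) * (-1) ^ s * (2 * (r : ℝ) ^ s - ((r : ℝ) - 1) ^ s) * p r 1 (n - s)
      = 0 := by
    have hterm : ∀ s ∈ Finset.range (n + 1),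
        (n.choose s : ℝ) * (-1) ^ s * (2 * (r : ℝ) ^ s - ((r : ℝ) - 1) ^ s) * p r 1 (n - s)
        = ∑' t : ℕ, (n.choose s : ℝ) * (-1) ^ s * (2 * (r : ℝ) ^ s - ((r : ℝ) - 1) ^ s) *
            (((r + t : ℕ) : ℝ) ^ (n - s) / 2 ^ (t + 1)) := by
      intro s _
      rw [p_one, tsum_mul_left]
    rw [Finset.sum_congr rfl hterm]
    rw [← Summable.tsum_finsetSum (by
      intro s _
      exact (aux_sum2 r (n - s)).mul_left _)]
    have hinner : ∀ t : ℕ,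
        (∑ s ∈ Finset.range (n + 1),
          (n.choose s : ℝ) * (-1) ^ s * (2 * (r : ℝ) ^ s - ((r : ℝ) - 1) ^ s) *
            (((r + t : ℕ) : ℝ) ^ (n - s) / 2 ^ (t + 1)))
        = (2 * (t : ℝ) ^ n - ((t : ℝ) + 1) ^ n) / 2 ^ (t + 1) := by
      intro t
      have hb1 : ((-(r : ℝ)) + ((r : ℝ) + t)) ^ n
          = ∑ s ∈ Finset.range (n + 1),
            (-(r : ℝ)) ^ s * ((r : ℝ) + t) ^ (n - s) * (n.choose s : ℝ) := by
        exact_mod_cast add_pow (-(r : ℝ)) ((r : ℝ) + t) n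
      have hb2 : ((-((r : ℝ) - 1)) + ((r : ℝ) + t)) ^ n
          = ∑ s ∈ Finset.range (n + 1),
            (-((r : ℝ) - 1)) ^ s * ((r : ℝ) + t) ^ (n - s) * (n.choose s : ℝ) := by
        exact_mod_cast add_pow (-((r : ℝ) - 1)) ((r : ℝ) + t) n
      have e1 : ((-(r : ℝ)) + ((r : ℝ) + t)) = (t : ℝ) := by ring
      have e2 : ((-((r : ℝ) - 1)) + ((r : ℝ) + t)) = (t : ℝ) + 1 := by ring
      rw [e1] at hb1
      rw [e2] at hb2
      have : ∑ s ∈ Finset.range (n + 1),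
          (n.choose s : ℝ) * (-1) ^ s * (2 * (r : ℝ) ^ s - ((r : ℝ) - 1) ^ s) *
            (((r + t : ℕ) : ℝ) ^ (n - s) / 2 ^ (t + 1))
          = (2 * (∑ s ∈ Finset.range (n + 1),
              (-(r : ℝ)) ^ s * ((r : ℝ) + t) ^ (n - s) * (n.choose s : ℝ))
            - (∑ s ∈ Finset.range (n + 1),
              (-((r : ℝ) - 1)) ^ s * ((r : ℝ) + t) ^ (n - s) * (n.choose s : ℝ))) /
            2 ^ (t + 1) := by
        rw [Finset.mul_sum, ← Finset.sum_sub_distrib, Finset.sum_div]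
        apply Finset.sum_congr rfl
        intro s _
        have hc : ((r + t : ℕ) : ℝ) = (r : ℝ) + t := by push_cast; ring
        rw [hc, neg_pow ((r : ℝ)), neg_pow ((r : ℝ) - 1)]
        ring
      rw [this, ← hb1, ← hb2]
    rw [tsum_congr hinner]
    have hsplit : ∀ t : ℕ, (2 * (t : ℝ) ^ n - ((t : ℝ) + 1) ^ n) / 2 ^ (t + 1)
        = (t : ℝ) ^ n / 2 ^ t - ((t : ℝ) + 1) ^ n / 2 ^ (t + 1) := by
      intro t
      rw [pow_succ]
      field_simp
    rw [tsum_congr hsplit]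
    have hA : Summable (fun t : ℕ => (t : ℝ) ^ n / 2 ^ t) := aux_sum n
    have hB : Summable (fun t : ℕ => ((t : ℝ) + 1) ^ n / 2 ^ (t + 1)) := by
      have := (summable_nat_add_iff (f := fun t : ℕ => ((t : ℝ)) ^ n / 2 ^ t) 1).2 hA
      refine this.congr (fun t => ?_)
      push_cast
      ring_nf
    rw [Summable.tsum_sub hA hB]
    have hshift : ∑' t : ℕ, ((t : ℝ) + 1) ^ n / 2 ^ (t + 1)
        = ∑' t : ℕ, (t : ℝ) ^ n / 2 ^ t := by
      rw [Summable.tsum_eq_zero_add hA]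
      simp [zero_pow (by omega : n ≠ 0)]
    rw [hshift, sub_self]
  -- split off the `s = 0` term
  have hset : Finset.range (n + 1) = insert 0 (Finset.Icc 1 n) := by
    ext x
    simp [Finset.mem_range, Finset.mem_Icc, Finset.mem_insert]
    omega
  rw [hset, Finset.sum_insert (by simp)] at key
  simp only [Nat.choose_zero_right, pow_zero, Nat.sub_zero] at key
  have key2 : p r 1 n = - ∑ s ∈ Finset.Icc 1 n,
      (n.choose s : ℝ) * (-1) ^ s * (2 * (r : ℝ) ^ s - ((r : ℝ) - 1) ^ s) * p r 1 (n - s) := by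
    have := key
    norm_num at this
    linarith [this]
  rw [hrR, hr1]
  rw [key2, ← Finset.sum_neg_distrib]
  apply Finset.sum_congr rfl
  intro s _
  rw [pow_succ]
  ring
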